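/- Let G₁, G₂ be centered Gaussians on ℝ^N with positive definite covariance matrices Σ₁, Σ₂. Suppose for some indices i, j that |(Σ₁)_{ij} - (Σ₂)_{ij}| ≥ δ · ((Σ₁)_{ii} + (Σ₁)_{jj} + (Σ₂)_{ii} + (Σ₂)_{jj}). Then the total variation distance between G₁ and G₂ is at least c·δ for some universal constant c > 0. -/

import Mathlib

open Matrix MeasureTheory

/-- Quadratic form of a two-point-supported vector. -/
lemma aux_quad {N : ℕ} (S : Matrix (Fin N) (Fin N) ℝ) (i j : Fin N) (a b : ℝ) :
    (Pi.single i a + Pi.single j b) ⬝ᵥ (S *ᵥ (Pi.single i a + Pi.single j b)) =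
      a * (S i i * a + S i j * b) + b * (S j i * a + S j j * b) := by
  simp [Matrix.mulVec_add, Matrix.mulVec_single, dotProduct_add,
    add_dotProduct, single_dotProduct, Pi.add_apply]
  ring

lemma aux_psd {N : ℕ} {S : Matrix (Fin N) (Fin N) ℝ} (hS : S.PosDef) (u : Fin N → ℝ) :
    0 ≤ u ⬝ᵥ (S *ᵥ u) := by
  have := hS.posSemidef.dotProduct_mulVec_nonneg u
  simpa using this

lemma aux_diag {N : ℕ} {S : Matrix (Fin N) (Fin N) ℝ} (hS : S.PosDef) (i : Fin N) :
    0 < S i i := by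
  have h := hS.dotProduct_mulVec_pos (x := Pi.single i 1) (by
    intro h
    have := congrFun h i
    simp at this)
  have hq : (Pi.single i 1 : Fin N → ℝ) ⬝ᵥ (S *ᵥ Pi.single i 1) = S i i := by
    simp [Matrix.mulVec_single, single_dotProduct]
  simpa [hq] using h

lemma aux_sym {N : ℕ} {S : Matrix (Fin N) (Fin N) ℝ} (hS : S.PosDef) (i j : Fin N) :
    S j i = S i j := by
  simpa using hS.1.apply i j

lemma aux_off {N : ℕ} {S : Matrix (Fin N) (Fin N) ℝ} (hS : S.PosDef) (i j : Fin N)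
    (hij : i ≠ j) : 2 * |S i j| ≤ S i i + S j j := by
  have hsym := aux_sym hS i j
  have h₁ := aux_psd hS (Pi.single i 1 + Pi.single j 1)
  have h₂ := aux_psd hS (Pi.single i 1 + Pi.single j (-1))
  rw [aux_quad] at h₁ h₂
  rcases abs_cases (S i j) with ⟨h, _⟩ | ⟨h, _⟩ <;> rw [h] <;> linarith

/-- Mean value style bound for the exponential on `[0,1]`. -/
lemma aux_exp {x y : ℝ} (hx0 : 0 ≤ x) (hx1 : x ≤ 1) (hy0 : 0 ≤ y) (hy1 : y ≤ 1) :
    Real.exp (-1) * |x - y| ≤ |Real.exp (-x) - Real.exp (-y)| := by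
  wlog hxy : x ≤ y generalizing x y
  · have := this hy0 hy1 hx0 hx1 (le_of_not_ge hxy)
    rwa [abs_sub_comm, abs_sub_comm (Real.exp (-y))] at this
  have key : Real.exp (-1) * (y - x) ≤ Real.exp (-x) - Real.exp (-y) := by
    have h1 : Real.exp (-x) - Real.exp (-y) = Real.exp (-y) * (Real.exp (y - x) - 1) := by
      rw [mul_sub, ← Real.exp_add]; ring_nf
    rw [h1]
    have h2 : Real.exp (-1) ≤ Real.exp (-y) := Real.exp_le_exp.2 (by linarith)
    have h3 : (y - x) ≤ Real.exp (y - x) - 1 := by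
      have := Real.add_one_le_exp (y - x); linarith
    nlinarith [Real.exp_pos (-y), Real.exp_pos (-1)]
  have hex : Real.exp (-y) ≤ Real.exp (-x) := Real.exp_le_exp.2 (by linarith)
  rw [abs_of_nonpos (by linarith), abs_of_nonneg (by linarith)]
  linarith

/-- If `μ₂ ≤ μ₁` are finite measures and `|f| ≤ 1`, the difference of integrals is at most
the difference of total masses. -/
lemma aux_int_diff {α : Type*} [MeasurableSpace α] (μ₁ μ₂ : Measure α)
    [IsFiniteMeasure μ₁] [IsFiniteMeasure μ₂] (h : μ₂ ≤ μ₁)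
    (f : α → ℝ) (hfm : Measurable f) (hf : ∀ x, |f x| ≤ 1) :
    |∫ x, f x ∂μ₁ - ∫ x, f x ∂μ₂| ≤ (μ₁ Set.univ).toReal - (μ₂ Set.univ).toReal := by
  set ν : Measure α := μ₁ - μ₂ with hν
  have hadd : ν + μ₂ = μ₁ := Measure.sub_add_cancel_of_le h
  haveI hνfin : IsFiniteMeasure ν := isFiniteMeasure_of_le μ₁ Measure.sub_le
  have hint : ∀ (μ : Measure α) [IsFiniteMeasure μ], Integrable f μ := by
    intro μ _
    exact (integrable_const 1).mono' hfm.aestronglyMeasurable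
      (Filter.Eventually.of_forall fun x => by simpa [Real.norm_eq_abs] using hf x)
  have h1 : ∫ x, f x ∂μ₁ = ∫ x, f x ∂ν + ∫ x, f x ∂μ₂ := by
    rw [← hadd, integral_add_measure (hint ν) (hint μ₂)]
  have h2 : |∫ x, f x ∂ν| ≤ (ν Set.univ).toReal := by
    calc |∫ x, f x ∂ν| = ‖∫ x, f x ∂ν‖ := (Real.norm_eq_abs _).symm
      _ ≤ ∫ x, ‖f x‖ ∂ν := norm_integral_le_integral_norm f
      _ ≤ ∫ _x, (1 : ℝ) ∂ν := integral_mono (hint ν).norm (integrable_const 1)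
            (fun x => by simpa [Real.norm_eq_abs] using hf x)
      _ = (ν Set.univ).toReal := by simp [measureReal_def]
  have h3 : (ν Set.univ).toReal = (μ₁ Set.univ).toReal - (μ₂ Set.univ).toReal := by
    rw [hν, Measure.sub_apply MeasurableSet.univ h,
      ENNReal.toReal_sub_of_le (h Set.univ) (measure_ne_top _ _)]
  rw [h1, add_sub_cancel_right]
  linarith [h2, h3.le, h3.ge]

/-- The key total variation bound via test functions bounded by 1. -/
lemma aux_tv {α : Type*} [MeasurableSpace α] (μ₁ μ₂ : Measure α)
    [IsProbabilityMeasure μ₁] [IsProbabilityMeasure μ₂]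
    (f : α → ℝ) (hfm : Measurable f) (hf : ∀ x, |f x| ≤ 1) :
    |∫ x, f x ∂μ₁ - ∫ x, f x ∂μ₂| ≤
      2 * ⨆ s : {s : Set α // MeasurableSet s}, |(μ₁ s.1).toReal - (μ₂ s.1).toReal| := by
  obtain ⟨s, hs, hpos, hneg⟩ := hahn_decomposition (μ := μ₁) (ν := μ₂)
  have hbdd : BddAbove (Set.range fun s : {s : Set α // MeasurableSet s} =>
      |(μ₁ s.1).toReal - (μ₂ s.1).toReal|) := by
    refine ⟨1, ?_⟩
    rintro x ⟨t, rfl⟩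
    have h₁ : (μ₁ t.1).toReal ≤ 1 := by
      have := (ENNReal.toReal_le_toReal (measure_ne_top μ₁ t.1) ENNReal.one_ne_top).2
        prob_le_one
      simpa using this
    have h₂ : (μ₂ t.1).toReal ≤ 1 := by
      have := (ENNReal.toReal_le_toReal (measure_ne_top μ₂ t.1) ENNReal.one_ne_top).2
        prob_le_one
      simpa using this
    rw [abs_sub_le_iff]
    exact ⟨by linarith [ENNReal.toReal_nonneg (a := μ₂ t.1)],
      by linarith [ENNReal.toReal_nonneg (a := μ₁ t.1)]⟩
  have hle : ∀ t : Set α, MeasurableSet t →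
      |(μ₁ t).toReal - (μ₂ t).toReal| ≤
        ⨆ s : {s : Set α // MeasurableSet s}, |(μ₁ s.1).toReal - (μ₂ s.1).toReal| :=
    fun t ht => le_ciSup hbdd ⟨t, ht⟩
  have hres₁ : μ₂.restrict s ≤ μ₁.restrict s := by
    rw [Measure.le_iff]
    intro t ht
    rw [Measure.restrict_apply ht, Measure.restrict_apply ht]
    exact hpos _ (ht.inter hs) Set.inter_subset_right
  have hres₂ : μ₁.restrict sᶜ ≤ μ₂.restrict sᶜ := by
    rw [Measure.le_iff]
    intro t ht
    rw [Measure.restrict_apply ht, Measure.restrict_apply ht]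
    exact hneg _ (ht.inter hs.compl) Set.inter_subset_right
  have hint : ∀ (μ : Measure α) [IsFiniteMeasure μ], Integrable f μ := by
    intro μ _
    exact (integrable_const 1).mono' hfm.aestronglyMeasurable
      (Filter.Eventually.of_forall fun x => by simpa [Real.norm_eq_abs] using hf x)
  have hA := aux_int_diff (μ₁.restrict s) (μ₂.restrict s) hres₁ f hfm hf
  have hB := aux_int_diff (μ₂.restrict sᶜ) (μ₁.restrict sᶜ) hres₂ f hfm hf
  rw [Measure.restrict_apply_univ, Measure.restrict_apply_univ] at hA hB
  set A₁ := ∫ x in s, f x ∂μ₁ with hA₁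
  set A₂ := ∫ x in s, f x ∂μ₂ with hA₂
  set B₁ := ∫ x in sᶜ, f x ∂μ₁ with hB₁
  set B₂ := ∫ x in sᶜ, f x ∂μ₂ with hB₂
  have hsplit₁ : ∫ x, f x ∂μ₁ = A₁ + B₁ := (integral_add_compl hs (hint μ₁)).symm
  have hsplit₂ : ∫ x, f x ∂μ₂ = A₂ + B₂ := (integral_add_compl hs (hint μ₂)).symm
  have habs : |∫ x, f x ∂μ₁ - ∫ x, f x ∂μ₂| ≤ |A₁ - A₂| + |B₂ - B₁| := by
    rw [hsplit₁, hsplit₂,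
      show A₁ + B₁ - (A₂ + B₂) = (A₁ - A₂) + -(B₂ - B₁) by ring]
    exact (abs_add_le _ _).trans (by rw [abs_neg])
  have k₁ : |A₁ - A₂| ≤ |(μ₁ s).toReal - (μ₂ s).toReal| :=
    hA.trans (le_abs_self _)
  have k₂ : |B₂ - B₁| ≤ |(μ₁ sᶜ).toReal - (μ₂ sᶜ).toReal| :=
    hB.trans (by rw [abs_sub_comm]; exact le_abs_self _)
  linarith [habs, k₁.trans (hle s hs), k₂.trans (hle sᶜ hs.compl)]

set_option maxHeartbeats 1000000 in
/-- There is a universal constant `c > 0` such that: if two centered Gaussians on `ℝ^N`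
(characterized by their real characteristic functions) have covariance matrices
`Σ₁, Σ₂` satisfying `|(Σ₁)_{ij} - (Σ₂)_{ij}| ≥ δ ((Σ₁)_{ii}+(Σ₁)_{jj}+(Σ₂)_{ii}+(Σ₂)_{jj})`
for some indices `i, j`, then their total variation distance is at least `c δ`. -/
theorem tv_gaussians_lower_bound :
    ∃ c : ℝ, 0 < c ∧
      ∀ (N : ℕ) (S₁ S₂ : Matrix (Fin N) (Fin N) ℝ),
        S₁.PosDef → S₂.PosDef →
        ∀ (μ₁ μ₂ : Measure (Fin N → ℝ)),
          IsProbabilityMeasure μ₁ → IsProbabilityMeasure μ₂ →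
          (∀ u : Fin N → ℝ,
            ∫ x, Real.cos (u ⬝ᵥ x) ∂μ₁ = Real.exp (-(u ⬝ᵥ (S₁ *ᵥ u)) / 2)) →
          (∀ u : Fin N → ℝ,
            ∫ x, Real.cos (u ⬝ᵥ x) ∂μ₂ = Real.exp (-(u ⬝ᵥ (S₂ *ᵥ u)) / 2)) →
          ∀ (i j : Fin N) (δ : ℝ), 0 < δ →
            δ * (S₁ i i + S₁ j j + S₂ i i + S₂ j j) ≤ |S₁ i j - S₂ i j| →
            c * δ ≤
              ⨆ s : {s : Set (Fin N → ℝ) // MeasurableSet s},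
                |(μ₁ s.1).toReal - (μ₂ s.1).toReal| := by
  refine ⟨Real.exp (-1) / 4, by positivity, ?_⟩
  intro N S₁ S₂ hS₁ hS₂ μ₁ μ₂ hμ₁ hμ₂ hφ₁ hφ₂ i j δ hδ hδa
  have h1i := aux_diag hS₁ i
  have h1j := aux_diag hS₁ j
  have h2i := aux_diag hS₂ i
  have h2j := aux_diag hS₂ j
  set a : ℝ := S₁ i i + S₁ j j + S₂ i i + S₂ j j with ha
  have ha0 : 0 < a := by positivity
  obtain ⟨u, hq₁0, hq₁2, hq₂0, hq₂2, hqd⟩ :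
      ∃ u : Fin N → ℝ, 0 ≤ u ⬝ᵥ (S₁ *ᵥ u) ∧ u ⬝ᵥ (S₁ *ᵥ u) ≤ 2 ∧
        0 ≤ u ⬝ᵥ (S₂ *ᵥ u) ∧ u ⬝ᵥ (S₂ *ᵥ u) ≤ 2 ∧
        δ ≤ |u ⬝ᵥ (S₁ *ᵥ u) - u ⬝ᵥ (S₂ *ᵥ u)| := by
    set t : ℝ := Real.sqrt a⁻¹ with ht
    have ht2 : t * t = a⁻¹ := Real.mul_self_sqrt (by positivity)
    have hainv : 0 < a⁻¹ := by positivity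
    rcases eq_or_ne i j with rfl | hij
    · -- diagonal case : use u = e_i scaled by t
      refine ⟨Pi.single i t, aux_psd hS₁ _, ?_, aux_psd hS₂ _, ?_, ?_⟩
      · have hq : (Pi.single i t : Fin N → ℝ) ⬝ᵥ (S₁ *ᵥ Pi.single i t) = S₁ i i * a⁻¹ := by
          simp [Matrix.mulVec, dotProduct, Pi.single_apply]
          linear_combination S₁ i i * ht2
        rw [hq, ← div_eq_mul_inv, div_le_iff₀ ha0]; linarith
      · have hq : (Pi.single i t : Fin N → ℝ) ⬝ᵥ (S₂ *ᵥ Pi.single i t) = S₂ i i * a⁻¹ := by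
          simp [Matrix.mulVec, dotProduct, Pi.single_apply]
          linear_combination S₂ i i * ht2
        rw [hq, ← div_eq_mul_inv, div_le_iff₀ ha0]; linarith
      · have hq1 : (Pi.single i t : Fin N → ℝ) ⬝ᵥ (S₁ *ᵥ Pi.single i t) = S₁ i i * a⁻¹ := by
          simp [Matrix.mulVec, dotProduct, Pi.single_apply]
          linear_combination S₁ i i * ht2
        have hq2 : (Pi.single i t : Fin N → ℝ) ⬝ᵥ (S₂ *ᵥ Pi.single i t) = S₂ i i * a⁻¹ := by
          simp [Matrix.mulVec, dotProduct, Pi.single_apply]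
          linear_combination S₂ i i * ht2
        rw [hq1, hq2, show S₁ i i * a⁻¹ - S₂ i i * a⁻¹ = (S₁ i i - S₂ i i) / a by
          field_simp, abs_div, abs_of_pos ha0, le_div_iff₀ ha0]
        linarith [hδa]
    · -- off-diagonal case
      have hsym₁ := aux_sym hS₁ i j
      have hsym₂ := aux_sym hS₂ i j
      have hoff₁ := aux_off hS₁ i j hij
      have hoff₂ := aux_off hS₂ i j hij
      have habs₁ := abs_nonneg (S₁ i j); have hle₁ := le_abs_self (S₁ i j)
      have hge₁ := neg_abs_le (S₁ i j)
      have hle₂ := le_abs_self (S₂ i j); have hge₂ := neg_abs_le (S₂ i j)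
      set X : ℝ := (S₁ i i + S₁ j j - S₂ i i - S₂ j j) + 2 * (S₁ i j - S₂ i j) with hX
      set Y : ℝ := (S₁ i i + S₁ j j - S₂ i i - S₂ j j) - 2 * (S₁ i j - S₂ i j) with hY
      have key : 2 * |S₁ i j - S₂ i j| ≤ |X| ∨ 2 * |S₁ i j - S₂ i j| ≤ |Y| := by
        by_contra hcon
        push_neg at hcon
        obtain ⟨hc1, hc2⟩ := hcon
        rcases abs_cases (S₁ i j - S₂ i j) with ⟨h, _⟩ | ⟨h, _⟩ <;>
          [skip; skip] <;>
          · rcases abs_cases X with ⟨hXc, _⟩ | ⟨hXc, _⟩ <;>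
            rcases abs_cases Y with ⟨hYc, _⟩ | ⟨hYc, _⟩ <;>
            simp only [hX, hY] at hXc hYc <;> linarith
      have quad : ∀ (S : Matrix (Fin N) (Fin N) ℝ), S j i = S i j → ∀ ε : ℝ,
          (Pi.single i t + Pi.single j (ε * t)) ⬝ᵥ
            (S *ᵥ (Pi.single i t + Pi.single j (ε * t))) =
          (S i i + 2 * ε * S i j + ε * ε * S j j) * a⁻¹ := by
        intro S hsym ε
        rw [aux_quad, hsym]
        linear_combination (S i i + 2 * ε * S i j + ε * ε * S j j) * ht2
      rcases key with hk | hk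
      · refine ⟨Pi.single i t + Pi.single j (1 * t), aux_psd hS₁ _, ?_, aux_psd hS₂ _, ?_, ?_⟩
        · rw [quad S₁ hsym₁ 1, ← div_eq_mul_inv, div_le_iff₀ ha0]; nlinarith
        · rw [quad S₂ hsym₂ 1, ← div_eq_mul_inv, div_le_iff₀ ha0]; nlinarith
        · rw [quad S₁ hsym₁ 1, quad S₂ hsym₂ 1,
            show (S₁ i i + 2 * 1 * S₁ i j + 1 * 1 * S₁ j j) * a⁻¹ -
              (S₂ i i + 2 * 1 * S₂ i j + 1 * 1 * S₂ j j) * a⁻¹ = X / a by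
              rw [hX]; field_simp; ring,
            abs_div, abs_of_pos ha0, le_div_iff₀ ha0]
          have h0 : 0 ≤ |S₁ i j - S₂ i j| := abs_nonneg _
          linarith [hδa]
      · refine ⟨Pi.single i t + Pi.single j ((-1) * t), aux_psd hS₁ _, ?_, aux_psd hS₂ _,
          ?_, ?_⟩
        · rw [quad S₁ hsym₁ (-1), ← div_eq_mul_inv, div_le_iff₀ ha0]; nlinarith
        · rw [quad S₂ hsym₂ (-1), ← div_eq_mul_inv, div_le_iff₀ ha0]; nlinarith
        · rw [quad S₁ hsym₁ (-1), quad S₂ hsym₂ (-1),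
            show (S₁ i i + 2 * (-1) * S₁ i j + (-1) * (-1) * S₁ j j) * a⁻¹ -
              (S₂ i i + 2 * (-1) * S₂ i j + (-1) * (-1) * S₂ j j) * a⁻¹ = Y / a by
              rw [hY]; field_simp; ring,
            abs_div, abs_of_pos ha0, le_div_iff₀ ha0]
          have h0 : 0 ≤ |S₁ i j - S₂ i j| := abs_nonneg _
          linarith [hδa]
  -- use the characteristic function bound
  have hfm : Measurable fun x : Fin N → ℝ => Real.cos (u ⬝ᵥ x) := by
    apply Real.measurable_cos.comp
    unfold dotProduct
    exact Finset.measurable_sum _ fun k _ => by fun_prop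
  have hfb : ∀ x : Fin N → ℝ, |Real.cos (u ⬝ᵥ x)| ≤ 1 := fun x => Real.abs_cos_le_one _
  have htv := aux_tv μ₁ μ₂ _ hfm hfb
  rw [hφ₁ u, hφ₂ u, neg_div, neg_div] at htv
  have hexp := aux_exp (x := u ⬝ᵥ (S₁ *ᵥ u) / 2) (y := u ⬝ᵥ (S₂ *ᵥ u) / 2)
    (by linarith) (by linarith) (by linarith) (by linarith)
  have habs2 : |u ⬝ᵥ (S₁ *ᵥ u) / 2 - u ⬝ᵥ (S₂ *ᵥ u) / 2| =
      |u ⬝ᵥ (S₁ *ᵥ u) - u ⬝ᵥ (S₂ *ᵥ u)| / 2 := by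
    rw [show u ⬝ᵥ (S₁ *ᵥ u) / 2 - u ⬝ᵥ (S₂ *ᵥ u) / 2 =
      (u ⬝ᵥ (S₁ *ᵥ u) - u ⬝ᵥ (S₂ *ᵥ u)) / 2 by ring, abs_div,
      abs_of_pos (show (0:ℝ) < 2 by norm_num)]
  have hxy : δ / 2 ≤ |u ⬝ᵥ (S₁ *ᵥ u) / 2 - u ⬝ᵥ (S₂ *ᵥ u) / 2| := by
    rw [habs2]; linarith
  have hfin := (mul_le_mul_of_nonneg_left hxy (Real.exp_pos (-1)).le).trans hexp
  have hepos := Real.exp_pos (-1)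
  linarith [hfin.trans htv]
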